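/- For m₁, m₂ ≥ 1 with m₁ + m₂ ≥ 3 and nonnegative integers k₁, k₂ with 2k₁ + 2k₂ + 2 < 2(m₁+m₂) − 1, the integral ∫₀^∞∫₀^∞ v^{2k₁} u^{k₂−1/2} (1+v²+u)^{−m₁}(1+v²+us²)^{−m₂} du dv converges for every s > 0 and defines a real-analytic function of s on (0,∞). -/

import Mathlib

open Real MeasureTheory Set

private lemma rear_f1_int (k : ℕ) :
    IntegrableOn (fun v : ℝ => v ^ (2*k) * ((1+v^2) ^ (k+1))⁻¹) (Ioi (0:ℝ)) := by
  have hcont : Continuous fun v : ℝ => v ^ (2*k) * ((1+v^2) ^ (k+1))⁻¹ := by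
    refine (continuous_pow _).mul (Continuous.inv₀ (by continuity) ?_)
    intro v; positivity
  rw [← Ioc_union_Ioi_eq_Ioi (zero_le_one (α := ℝ))]
  refine IntegrableOn.union ?_ ?_
  · refine Integrable.mono' (g := fun _ => (1:ℝ))
      (integrableOn_const measure_Ioc_lt_top.ne)
      hcont.aestronglyMeasurable.restrict ?_
    filter_upwards [ae_restrict_mem measurableSet_Ioc] with v hv
    rw [Real.norm_eq_abs, abs_of_nonneg (mul_nonneg (pow_nonneg hv.1.le _)
      (inv_nonneg.2 (pow_nonneg (by nlinarith [sq_nonneg v]) _)))]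
    have h1 : v ^ (2*k) ≤ 1 := pow_le_one₀ hv.1.le hv.2
    have h2 : ((1+v^2) ^ (k+1))⁻¹ ≤ 1 := by
      rw [inv_le_one_iff₀]; right; exact one_le_pow₀ (by nlinarith)
    calc v ^ (2*k) * ((1+v^2) ^ (k+1))⁻¹ ≤ 1 * 1 := by
          exact mul_le_mul h1 h2 (by positivity) zero_le_one
      _ = 1 := by ring
  · refine Integrable.mono'
      (integrableOn_Ioi_rpow_of_lt (by norm_num : (-2:ℝ) < -1) zero_lt_one)
      hcont.aestronglyMeasurable.restrict ?_
    filter_upwards [ae_restrict_mem measurableSet_Ioi] with v hv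
    have hv0 : (0:ℝ) < v := lt_trans zero_lt_one hv
    rw [Real.norm_eq_abs, abs_of_nonneg (mul_nonneg (pow_nonneg hv0.le _)
      (inv_nonneg.2 (pow_nonneg (by nlinarith [sq_nonneg v]) _)))]
    have h1 : v ^ (2*(k+1)) ≤ (1+v^2) ^ (k+1) := by
      rw [pow_mul]; exact pow_le_pow_left₀ (by positivity) (by nlinarith) _
    calc v ^ (2*k) * ((1+v^2) ^ (k+1))⁻¹
        ≤ v ^ (2*k) * (v ^ (2*(k+1)))⁻¹ := by
          refine mul_le_mul_of_nonneg_left ?_ (by positivity)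
          exact inv_anti₀ (by positivity) h1
      _ = v ^ (-2:ℝ) := by
          rw [← Real.rpow_natCast v (2*k), ← Real.rpow_natCast v (2*(k+1)),
            ← Real.rpow_neg hv0.le, ← Real.rpow_add hv0]
          norm_num; ring_nf
          rw [Real.rpow_neg hv0.le, inv_pow, Real.rpow_two]

private lemma rear_f2_int (k n : ℕ) (hn : k + 1 ≤ n) :
    IntegrableOn (fun u : ℝ => u ^ ((k:ℝ) - 1/2) * ((1+u) ^ n)⁻¹) (Ioi (0:ℝ)) := by
  have hcont : ContinuousOn (fun u : ℝ => u ^ ((k:ℝ) - 1/2) * ((1+u) ^ n)⁻¹) (Ioi 0) := by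
    refine ContinuousOn.mul (ContinuousOn.rpow_const continuousOn_id
      (fun x hx => Or.inl (ne_of_gt hx))) (ContinuousOn.inv₀ (by fun_prop) ?_)
    intro x hx
    have : (0:ℝ) < x := hx
    positivity
  rw [← Ioc_union_Ioi_eq_Ioi (zero_le_one (α := ℝ))]
  refine IntegrableOn.union ?_ ?_
  · have hint : IntegrableOn (fun u : ℝ => u ^ (-1/2 : ℝ)) (Ioc (0:ℝ) 1) := by
      have := intervalIntegral.intervalIntegrable_rpow' (by norm_num : (-1:ℝ) < -1/2) (a := 0) (b := 1)
      rwa [intervalIntegrable_iff, uIoc_of_le zero_le_one] at this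
    refine Integrable.mono' hint
      ((hcont.mono Ioc_subset_Ioi_self).aestronglyMeasurable measurableSet_Ioc) ?_
    filter_upwards [ae_restrict_mem measurableSet_Ioc] with u hu
    have hu0 : (0:ℝ) < u := hu.1
    rw [Real.norm_eq_abs, abs_of_nonneg (mul_nonneg (rpow_nonneg hu0.le _)
      (inv_nonneg.2 (pow_nonneg (by linarith) _)))]
    calc u ^ ((k:ℝ) - 1/2) * ((1+u) ^ n)⁻¹
        ≤ u ^ (-1/2 : ℝ) * 1 := by
          refine mul_le_mul ?_ ?_ (by positivity) (rpow_nonneg hu0.le _)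
          · exact rpow_le_rpow_of_exponent_ge hu0 hu.2 (by push_cast; linarith [Nat.cast_nonneg (α := ℝ) k])
          · rw [inv_le_one_iff₀]; right; exact one_le_pow₀ (by linarith)
      _ = u ^ (-1/2 : ℝ) := mul_one _
  · refine Integrable.mono'
      (integrableOn_Ioi_rpow_of_lt (show (k:ℝ) - 1/2 - n < -1 by
        have : (k:ℝ) + 1 ≤ n := by exact_mod_cast hn
        linarith) zero_lt_one)
      ((hcont.mono (Ioi_subset_Ioi zero_le_one)).aestronglyMeasurable measurableSet_Ioi) ?_
    filter_upwards [ae_restrict_mem measurableSet_Ioi] with u hu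
    have hu0 : (0:ℝ) < u := lt_trans zero_lt_one hu
    rw [Real.norm_eq_abs, abs_of_nonneg (mul_nonneg (rpow_nonneg hu0.le _)
      (inv_nonneg.2 (pow_nonneg (by linarith) _)))]
    have h1 : u ^ n ≤ (1+u) ^ n := pow_le_pow_left₀ hu0.le (by linarith) _
    calc u ^ ((k:ℝ) - 1/2) * ((1+u) ^ n)⁻¹
        ≤ u ^ ((k:ℝ) - 1/2) * (u ^ n)⁻¹ := by
          exact mul_le_mul_of_nonneg_left (inv_anti₀ (by positivity) h1)
            (rpow_nonneg hu0.le _)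
      _ = u ^ ((k:ℝ) - 1/2 - n) := by
          rw [← Real.rpow_natCast u n, ← Real.rpow_neg hu0.le, ← Real.rpow_add hu0]
          ring_nf

private lemma rear_g_int (k1 k2 M : ℕ) (hM : k1 + k2 + 2 ≤ M) :
    IntegrableOn
      (fun p : ℝ × ℝ => p.1 ^ (2*k1) * p.2 ^ ((k2:ℝ) - 1/2) * ((1+p.1^2+p.2) ^ M)⁻¹)
      (Ioi (0:ℝ) ×ˢ Ioi (0:ℝ)) := by
  set n := M - k1 - 1 with hn
  have hkn : k2 + 1 ≤ n := by omega
  have hMn : k1 + 1 + n = M := by omega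
  have hprod : IntegrableOn
      (fun p : ℝ × ℝ => (p.1 ^ (2*k1) * ((1+p.1^2) ^ (k1+1))⁻¹) *
        (p.2 ^ ((k2:ℝ) - 1/2) * ((1+p.2) ^ n)⁻¹)) (Ioi (0:ℝ) ×ˢ Ioi (0:ℝ)) := by
    have := (rear_f1_int k1).mul_prod (rear_f2_int k2 n hkn)
    rwa [Measure.prod_restrict, ← Measure.volume_eq_prod] at this
  have hmeas :
      AEStronglyMeasurable
        (fun p : ℝ × ℝ => p.1 ^ (2*k1) * p.2 ^ ((k2:ℝ) - 1/2) * ((1+p.1^2+p.2) ^ M)⁻¹)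
        (volume.restrict (Ioi (0:ℝ) ×ˢ Ioi (0:ℝ))) := by
    refine ContinuousOn.aestronglyMeasurable ?_ (measurableSet_Ioi.prod measurableSet_Ioi)
    refine ContinuousOn.mul (ContinuousOn.mul (by fun_prop) ?_) (ContinuousOn.inv₀ (by fun_prop) ?_)
    · exact ContinuousOn.rpow_const (continuous_snd.continuousOn)
        (fun p hp => Or.inl (ne_of_gt hp.2))
    · intro p hp
      have h1 : (0:ℝ) < p.2 := hp.2
      positivity
  refine Integrable.mono' hprod hmeas ?_
  filter_upwards [ae_restrict_mem (measurableSet_Ioi.prod measurableSet_Ioi)] with p hp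
  obtain ⟨hv, hu⟩ := hp
  simp only [mem_Ioi] at hv hu
  set v := p.1; set u := p.2
  have hX : (0:ℝ) < 1 + v^2 + u := by nlinarith
  rw [Real.norm_eq_abs, abs_of_nonneg (mul_nonneg (mul_nonneg (pow_nonneg hv.le _)
    (rpow_nonneg hu.le _)) (inv_nonneg.2 (pow_nonneg hX.le _)))]
  have key : (1+v^2) ^ (k1+1) * (1+u) ^ n ≤ (1+v^2+u) ^ M := by
    rw [← hMn]
    have e1 : (1+v^2) ^ (k1+1) ≤ (1+v^2+u) ^ (k1+1) :=
      pow_le_pow_left₀ (by nlinarith) (by nlinarith) _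
    have e2 : (1+u) ^ n ≤ (1+v^2+u) ^ n :=
      pow_le_pow_left₀ (by nlinarith) (by nlinarith) _
    calc (1+v^2) ^ (k1+1) * (1+u) ^ n
        ≤ (1+v^2+u) ^ (k1+1) * (1+v^2+u) ^ n :=
          mul_le_mul e1 e2 (by positivity) (by positivity)
      _ = (1+v^2+u) ^ (k1+1+n) := (pow_add _ _ _).symm
  calc v ^ (2*k1) * u ^ ((k2:ℝ) - 1/2) * ((1+v^2+u) ^ M)⁻¹
      ≤ v ^ (2*k1) * u ^ ((k2:ℝ) - 1/2) * ((1+v^2) ^ (k1+1) * (1+u) ^ n)⁻¹ := by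
        refine mul_le_mul_of_nonneg_left (inv_anti₀ (by positivity) key) ?_
        exact mul_nonneg (pow_nonneg hv.le _) (rpow_nonneg hu.le _)
    _ = (v ^ (2*k1) * ((1+v^2) ^ (k1+1))⁻¹) * (u ^ ((k2:ℝ) - 1/2) * ((1+u) ^ n)⁻¹) := by
        rw [mul_inv]; ring

private noncomputable def rearFc (m1 m2 k1 k2 : ℕ) (s : ℂ) (p : ℝ × ℝ) : ℂ :=
  ((p.1 ^ (2*k1) * p.2 ^ ((k2:ℝ) - 1/2) * (1+p.1^2+p.2) ^ (-(m1:ℤ)) : ℝ) : ℂ) *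
    (1 + (p.1:ℂ)^2 + (p.2:ℂ) * s^2) ^ (-(m2:ℤ))

private noncomputable def rearFc' (m1 m2 k1 k2 : ℕ) (s : ℂ) (p : ℝ × ℝ) : ℂ :=
  ((p.1 ^ (2*k1) * p.2 ^ ((k2:ℝ) - 1/2) * (1+p.1^2+p.2) ^ (-(m1:ℤ)) : ℝ) : ℂ) *
    ((-(m2:ℤ) : ℂ) * (1 + (p.1:ℂ)^2 + (p.2:ℂ) * s^2) ^ (-(m2:ℤ) - 1) * ((p.2:ℂ) * (2*s)))

private lemma rear_z_re {s : ℂ} {v u : ℝ} :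
    (1 + (v:ℂ)^2 + (u:ℂ) * s^2).re = 1 + v^2 + u * (s^2).re := by
  simp [Complex.add_re, Complex.mul_re, ← Complex.ofReal_pow]

private lemma rear_z_bound {δ : ℝ} (hδ : 0 < δ) {s : ℂ} (hs : δ ≤ (s^2).re)
    {v u : ℝ} (hv : 0 < v) (hu : 0 < u) :
    min 1 δ * (1+v^2+u) ≤ ‖1 + (v:ℂ)^2 + (u:ℂ) * s^2‖ := by
  have h2 : min 1 δ ≤ 1 := min_le_left _ _
  have h3 : min 1 δ ≤ δ := min_le_right _ _
  have hre := Complex.re_le_norm (1 + (v:ℂ)^2 + (u:ℂ) * s^2)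
  rw [rear_z_re] at hre
  nlinarith [sq_nonneg v]

private lemma rear_z_ne {δ : ℝ} (hδ : 0 < δ) {s : ℂ} (hs : δ ≤ (s^2).re)
    {v u : ℝ} (hv : 0 < v) (hu : 0 < u) :
    (1 + (v:ℂ)^2 + (u:ℂ) * s^2) ≠ 0 := by
  intro h
  have := rear_z_bound hδ hs hv hu
  rw [h, norm_zero] at this
  have hc : 0 < min 1 δ := lt_min zero_lt_one hδ
  nlinarith [sq_nonneg v]

private lemma rear_Fc_bound (m1 m2 k1 k2 : ℕ) {δ : ℝ} (hδ : 0 < δ) {s : ℂ}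
    (hs : δ ≤ (s^2).re) {p : ℝ × ℝ} (hp : p ∈ Ioi (0:ℝ) ×ˢ Ioi (0:ℝ)) :
    ‖rearFc m1 m2 k1 k2 s p‖ ≤ ((min 1 δ) ^ m2)⁻¹ *
      (p.1 ^ (2*k1) * p.2 ^ ((k2:ℝ) - 1/2) * ((1+p.1^2+p.2) ^ (m1+m2))⁻¹) := by
  obtain ⟨hv, hu⟩ := hp
  simp only [mem_Ioi] at hv hu
  set v := p.1; set u := p.2
  have hX : (0:ℝ) < 1 + v^2 + u := by nlinarith
  set c := min 1 δ with hcdef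
  have hc : 0 < c := lt_min zero_lt_one hδ
  have hz := rear_z_bound hδ hs hv hu
  have hz0 : (0:ℝ) < ‖1 + (v:ℂ)^2 + (u:ℂ) * s^2‖ := lt_of_lt_of_le (by positivity) hz
  rw [rearFc, norm_mul, Complex.norm_real, norm_zpow, Real.norm_eq_abs,
    abs_of_nonneg (by positivity)]
  simp only [zpow_neg, zpow_natCast]
  set A := ‖1 + (v:ℂ)^2 + (u:ℂ) * s^2‖
  have h4 : (A ^ m2)⁻¹ ≤ ((c * (1+v^2+u)) ^ m2)⁻¹ :=
    inv_anti₀ (by positivity) (pow_le_pow_left₀ (by positivity) hz _)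
  calc v ^ (2*k1) * u ^ ((k2:ℝ) - 1/2) * ((1+v^2+u) ^ m1)⁻¹ * (A ^ m2)⁻¹
      ≤ v ^ (2*k1) * u ^ ((k2:ℝ) - 1/2) * ((1+v^2+u) ^ m1)⁻¹ *
        ((c * (1+v^2+u)) ^ m2)⁻¹ := by
        refine mul_le_mul_of_nonneg_left h4 (by positivity)
    _ = (c ^ m2)⁻¹ * (v ^ (2*k1) * u ^ ((k2:ℝ) - 1/2) * ((1+v^2+u) ^ (m1+m2))⁻¹) := by
        rw [mul_pow, mul_inv, pow_add, mul_inv]; ring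

private lemma rear_Fc'_bound (m1 m2 k1 k2 : ℕ) {δ R : ℝ} (hδ : 0 < δ) {s : ℂ}
    (hs : δ ≤ (s^2).re) (hR : ‖s‖ ≤ R) {p : ℝ × ℝ} (hp : p ∈ Ioi (0:ℝ) ×ˢ Ioi (0:ℝ)) :
    ‖rearFc' m1 m2 k1 k2 s p‖ ≤ (2 * m2 * R * ((min 1 δ) ^ (m2+1))⁻¹) *
      (p.1 ^ (2*k1) * p.2 ^ ((k2:ℝ) - 1/2) * ((1+p.1^2+p.2) ^ (m1+m2))⁻¹) := by
  obtain ⟨hv, hu⟩ := hp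
  simp only [mem_Ioi] at hv hu
  have hX : (0:ℝ) < 1 + p.1^2 + p.2 := by nlinarith
  have hc : 0 < min 1 δ := lt_min zero_lt_one hδ
  have hz := rear_z_bound hδ hs hv hu
  have hz0 : (0:ℝ) < ‖1 + (p.1:ℂ)^2 + (p.2:ℂ) * s^2‖ := lt_of_lt_of_le (by positivity) hz
  have hR0 : 0 ≤ R := le_trans (norm_nonneg _) hR
  have hexp : (-(m2:ℤ) - 1) = -((m2+1 : ℕ) : ℤ) := by push_cast; ring
  have ha : 0 ≤ p.1 ^ (2*k1) * p.2 ^ ((k2:ℝ) - 1/2) :=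
    mul_nonneg (pow_nonneg hv.le _) (rpow_nonneg hu.le _)
  rw [rearFc', norm_mul, norm_mul, norm_mul, Complex.norm_real, Real.norm_eq_abs,
    abs_of_nonneg (by positivity), hexp, norm_zpow, norm_mul, Complex.norm_real,
    Real.norm_eq_abs, abs_of_nonneg hu.le, norm_mul]
  simp only [zpow_neg, zpow_natCast, norm_neg, Complex.norm_intCast, Int.cast_natCast,
    Nat.abs_cast, Complex.norm_ofNat, Complex.norm_natCast]
  set A := ‖1 + (p.1:ℂ)^2 + (p.2:ℂ) * s^2‖ with hA
  set X := 1 + p.1^2 + p.2 with hXdef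
  have hA1 : (A ^ (m2+1))⁻¹ ≤ (min 1 δ ^ (m2+1))⁻¹ * (X ^ (m2+1))⁻¹ := by
    rw [← mul_inv, ← mul_pow]
    exact inv_anti₀ (by positivity) (pow_le_pow_left₀ (by positivity) hz _)
  have h2 : p.2 * (X ^ (m2+1))⁻¹ ≤ (X ^ m2)⁻¹ := by
    rw [pow_succ, mul_inv]
    have hle : p.2 * X⁻¹ ≤ 1 := by
      rw [← div_eq_mul_inv]
      exact (div_le_one hX).2 (by nlinarith)
    calc p.2 * ((X ^ m2)⁻¹ * X⁻¹) = (X ^ m2)⁻¹ * (p.2 * X⁻¹) := by ring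
      _ ≤ (X ^ m2)⁻¹ * 1 := mul_le_mul_of_nonneg_left hle (by positivity)
      _ = (X ^ m2)⁻¹ := mul_one _
  have hinner : (m2 : ℝ) * (A ^ (m2+1))⁻¹ * (p.2 * (2 * ‖s‖)) ≤
      (m2 : ℝ) * ((min 1 δ ^ (m2+1))⁻¹ * (X ^ (m2+1))⁻¹) * (p.2 * (2 * R)) := by
    refine mul_le_mul (mul_le_mul_of_nonneg_left hA1 (Nat.cast_nonneg _)) ?_ ?_ ?_
    · exact mul_le_mul_of_nonneg_left (by nlinarith) hu.le
    · positivity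
    · positivity
  calc p.1 ^ (2*k1) * p.2 ^ ((k2:ℝ) - 1/2) * (X ^ m1)⁻¹ *
        ((m2 : ℝ) * (A ^ (m2+1))⁻¹ * (p.2 * (2 * ‖s‖)))
      ≤ p.1 ^ (2*k1) * p.2 ^ ((k2:ℝ) - 1/2) * (X ^ m1)⁻¹ *
        ((m2 : ℝ) * ((min 1 δ ^ (m2+1))⁻¹ * (X ^ (m2+1))⁻¹) * (p.2 * (2 * R))) := by
        refine mul_le_mul_of_nonneg_left hinner ?_
        exact mul_nonneg ha (by positivity)
    _ = (2 * m2 * R * ((min 1 δ) ^ (m2+1))⁻¹) *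
        (p.1 ^ (2*k1) * p.2 ^ ((k2:ℝ) - 1/2) * (X ^ m1)⁻¹ * (p.2 * (X ^ (m2+1))⁻¹)) := by
        ring
    _ ≤ (2 * m2 * R * ((min 1 δ) ^ (m2+1))⁻¹) *
        (p.1 ^ (2*k1) * p.2 ^ ((k2:ℝ) - 1/2) * (X ^ m1)⁻¹ * (X ^ m2)⁻¹) := by
        refine mul_le_mul_of_nonneg_left (mul_le_mul_of_nonneg_left h2 ?_) (by positivity)
        exact mul_nonneg ha (by positivity)
    _ = (2 * m2 * R * ((min 1 δ) ^ (m2+1))⁻¹) *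
        (p.1 ^ (2*k1) * p.2 ^ ((k2:ℝ) - 1/2) * (X ^ (m1+m2))⁻¹) := by
        rw [pow_add, mul_inv]; ring

private lemma rear_hasDeriv (m1 m2 k1 k2 : ℕ) {s : ℂ} {p : ℝ × ℝ}
    (hz : (1 + (p.1:ℂ)^2 + (p.2:ℂ) * s^2) ≠ 0) :
    HasDerivAt (fun t => rearFc m1 m2 k1 k2 t p) (rearFc' m1 m2 k1 k2 s p) s := by
  have hw : HasDerivAt (fun t : ℂ => 1 + (p.1:ℂ)^2 + (p.2:ℂ) * t^2) ((p.2:ℂ) * (2*s)) s := by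
    have h := ((hasDerivAt_pow 2 s).const_mul ((p.2 : ℂ))).const_add (1 + (p.1:ℂ)^2)
    refine h.congr_deriv ?_
    simp [pow_one]
  have houter := hasDerivAt_zpow (-(m2:ℤ)) _ (Or.inl hz)
  have hcomp := houter.comp s hw
  have := hcomp.const_mul
    ((p.1 ^ (2*k1) * p.2 ^ ((k2:ℝ) - 1/2) * (1+p.1^2+p.2) ^ (-(m1:ℤ)) : ℝ) : ℂ)
  unfold rearFc rearFc'
  simpa only [Int.cast_neg, Int.cast_natCast, Function.comp] using this

private lemma rear_Fc_meas (m1 m2 k1 k2 : ℕ) {s : ℂ} (hs : 0 < (s^2).re) :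
    AEStronglyMeasurable (rearFc m1 m2 k1 k2 s)
      (volume.restrict (Ioi (0:ℝ) ×ˢ Ioi (0:ℝ))) := by
  refine ContinuousOn.aestronglyMeasurable ?_ (measurableSet_Ioi.prod measurableSet_Ioi)
  refine ContinuousOn.mul ?_ ?_
  · refine Complex.continuous_ofReal.comp_continuousOn ?_
    refine ContinuousOn.mul (ContinuousOn.mul (by fun_prop) ?_) ?_
    · exact ContinuousOn.rpow_const continuous_snd.continuousOn
        (fun p hp => Or.inl (ne_of_gt hp.2))
    · refine ContinuousOn.zpow₀ (by fun_prop) _ (fun p hp => Or.inl ?_)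
      have h1 : (0:ℝ) < p.1 := hp.1
      have h2 : (0:ℝ) < p.2 := hp.2
      positivity
  · refine ContinuousOn.zpow₀ (by fun_prop) _ (fun p hp => Or.inl ?_)
    exact rear_z_ne hs (le_refl _) hp.1 hp.2

private lemma rear_Fc'_meas (m1 m2 k1 k2 : ℕ) {s : ℂ} (hs : 0 < (s^2).re) :
    AEStronglyMeasurable (rearFc' m1 m2 k1 k2 s)
      (volume.restrict (Ioi (0:ℝ) ×ˢ Ioi (0:ℝ))) := by
  refine ContinuousOn.aestronglyMeasurable ?_ (measurableSet_Ioi.prod measurableSet_Ioi)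
  unfold rearFc'
  refine ContinuousOn.mul ?_ (ContinuousOn.mul (ContinuousOn.mul continuousOn_const ?_) (by fun_prop))
  · refine Complex.continuous_ofReal.comp_continuousOn ?_
    refine ContinuousOn.mul (ContinuousOn.mul (by fun_prop) ?_) ?_
    · exact ContinuousOn.rpow_const continuous_snd.continuousOn
        (fun p hp => Or.inl (ne_of_gt hp.2))
    · refine ContinuousOn.zpow₀ (by fun_prop) _ (fun p hp => Or.inl ?_)
      have h1 : (0:ℝ) < p.1 := hp.1
      have h2 : (0:ℝ) < p.2 := hp.2
      positivity
  · refine ContinuousOn.zpow₀ (by fun_prop) _ (fun p hp => Or.inl ?_)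
    exact rear_z_ne hs (le_refl _) hp.1 hp.2

theorem rearrangement_integral_convergence (m1 m2 k1 k2 : ℕ)
    (hm1 : 1 ≤ m1) (hm2 : 1 ≤ m2) (hm : 3 ≤ m1 + m2)
    (hk : 2 * k1 + 2 * k2 + 2 < 2 * (m1 + m2) - 1) :
    (∀ s : ℝ, 0 < s →
      IntegrableOn
        (fun p : ℝ × ℝ => p.1 ^ (2 * k1) * p.2 ^ ((k2 : ℝ) - 1 / 2) *
          (1 + p.1 ^ 2 + p.2) ^ (-(m1 : ℤ)) *
          (1 + p.1 ^ 2 + p.2 * s ^ 2) ^ (-(m2 : ℤ)))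
        (Set.Ioi 0 ×ˢ Set.Ioi 0)) ∧
    AnalyticOn ℝ
      (fun s : ℝ => ∫ p in Set.Ioi (0:ℝ) ×ˢ Set.Ioi (0:ℝ),
        p.1 ^ (2 * k1) * p.2 ^ ((k2 : ℝ) - 1 / 2) *
          (1 + p.1 ^ 2 + p.2) ^ (-(m1 : ℤ)) *
          (1 + p.1 ^ 2 + p.2 * s ^ 2) ^ (-(m2 : ℤ)))
      (Set.Ioi 0) := by
  have hM : k1 + k2 + 2 ≤ m1 + m2 := by omega
  have hSmeas : MeasurableSet (Ioi (0:ℝ) ×ˢ Ioi (0:ℝ)) :=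
    measurableSet_Ioi.prod measurableSet_Ioi
  have hg := rear_g_int k1 k2 (m1+m2) hM
  -- the complex-extended integral
  set G : ℂ → ℂ := fun s => ∫ p in Ioi (0:ℝ) ×ˢ Ioi (0:ℝ), rearFc m1 m2 k1 k2 s p with hGdef
  -- bridge between the real and complex integrands
  have hcast : ∀ (s : ℝ) (p : ℝ × ℝ), rearFc m1 m2 k1 k2 (↑s) p =
      ((p.1 ^ (2 * k1) * p.2 ^ ((k2 : ℝ) - 1 / 2) *
        (1 + p.1 ^ 2 + p.2) ^ (-(m1 : ℤ)) *
        (1 + p.1 ^ 2 + p.2 * s ^ 2) ^ (-(m2 : ℤ)) : ℝ) : ℂ) := by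
    intro s p
    unfold rearFc
    push_cast
    ring
  constructor
  · -- integrability
    intro s hs
    have hδ : (0:ℝ) < s ^ 2 := by positivity
    have hsre : (s:ℝ)^2 ≤ (((s:ℂ))^2).re := by
      rw [← Complex.ofReal_pow, Complex.ofReal_re]
    refine Integrable.mono' (hg.const_mul ((min 1 (s^2) ^ m2)⁻¹)) ?_ ?_
    · have := rear_Fc_meas m1 m2 k1 k2 (s := (s:ℂ)) (by rw [← Complex.ofReal_pow, Complex.ofReal_re]; exact hδ)
      have heq : (fun p : ℝ × ℝ => p.1 ^ (2 * k1) * p.2 ^ ((k2 : ℝ) - 1 / 2) *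
          (1 + p.1 ^ 2 + p.2) ^ (-(m1 : ℤ)) *
          (1 + p.1 ^ 2 + p.2 * s ^ 2) ^ (-(m2 : ℤ))) =
          fun p => (rearFc m1 m2 k1 k2 (↑s) p).re := by
        funext p; rw [hcast s p, Complex.ofReal_re]
      rw [heq]
      exact Complex.continuous_re.comp_aestronglyMeasurable this
    · filter_upwards [ae_restrict_mem hSmeas] with p hp
      have hb := rear_Fc_bound m1 m2 k1 k2 hδ hsre hp
      rw [hcast s p, Complex.norm_real] at hb
      exact hb
  · -- analyticity
    have hU : IsOpen {s : ℂ | 0 < (s^2).re} :=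
      isOpen_lt continuous_const (Complex.continuous_re.comp (continuous_pow 2))
    have hGdiff : ∀ s₀ ∈ {s : ℂ | 0 < (s^2).re}, DifferentiableAt ℂ G s₀ := by
      intro s₀ hs₀
      have hs₀' : 0 < (s₀^2).re := hs₀
      set δ : ℝ := (s₀^2).re / 2 with hδdef
      have hδ : 0 < δ := half_pos hs₀'
      have hopen : IsOpen {s : ℂ | δ < (s^2).re} :=
        isOpen_lt continuous_const (Complex.continuous_re.comp (continuous_pow 2))
      have hmem : s₀ ∈ {s : ℂ | δ < (s^2).re} := by
        simp only [Set.mem_setOf_eq]; linarith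
      obtain ⟨ε, hε, hball⟩ := Metric.isOpen_iff.1 hopen s₀ hmem
      set R : ℝ := ‖s₀‖ + ε with hRdef
      have key := hasDerivAt_integral_of_dominated_loc_of_deriv_le (𝕜 := ℂ)
        (μ := volume.restrict (Ioi (0:ℝ) ×ˢ Ioi (0:ℝ)))
        (F := fun s p => rearFc m1 m2 k1 k2 s p)
        (F' := fun s p => rearFc' m1 m2 k1 k2 s p)
        (x₀ := s₀)
        (bound := fun p => (2 * m2 * R * ((min 1 δ) ^ (m2+1))⁻¹) *
          (p.1 ^ (2*k1) * p.2 ^ ((k2:ℝ) - 1/2) * ((1+p.1^2+p.2) ^ (m1+m2))⁻¹))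
        (Metric.ball_mem_nhds s₀ hε) ?_ ?_ ?_ ?_ ?_ ?_
      · exact key.2.differentiableAt
      · refine Filter.eventually_of_mem (Metric.ball_mem_nhds s₀ hε) (fun s hsb => ?_)
        exact rear_Fc_meas m1 m2 k1 k2 (lt_trans hδ (hball hsb))
      · refine Integrable.mono' (hg.const_mul ((min 1 δ ^ m2)⁻¹))
          (rear_Fc_meas m1 m2 k1 k2 hs₀') ?_
        filter_upwards [ae_restrict_mem hSmeas] with p hp
        exact rear_Fc_bound m1 m2 k1 k2 hδ (by linarith) hp
      · exact rear_Fc'_meas m1 m2 k1 k2 hs₀'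
      · filter_upwards [ae_restrict_mem hSmeas] with p hp
        intro s hsb
        have hnorm : ‖s‖ ≤ R := by
          have h1 : ‖s - s₀‖ < ε := mem_ball_iff_norm.1 hsb
          have h2 : ‖s‖ - ‖s₀‖ ≤ ‖s - s₀‖ := norm_sub_norm_le s s₀
          rw [hRdef]; linarith
        exact rear_Fc'_bound m1 m2 k1 k2 hδ (le_of_lt (hball hsb)) hnorm hp
      · exact hg.const_mul _
      · filter_upwards [ae_restrict_mem hSmeas] with p hp
        intro s hsb
        exact rear_hasDeriv m1 m2 k1 k2
          (rear_z_ne hδ (le_of_lt (hball hsb)) hp.1 hp.2)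
    have hGan : AnalyticOnNhd ℂ G {s : ℂ | 0 < (s^2).re} :=
      DifferentiableOn.analyticOnNhd
        (fun s hs => (hGdiff s hs).differentiableWithinAt) hU
    have hbridge : ∀ s : ℝ,
        G ↑s = ((∫ p in Ioi (0:ℝ) ×ˢ Ioi (0:ℝ),
          p.1 ^ (2 * k1) * p.2 ^ ((k2 : ℝ) - 1 / 2) *
          (1 + p.1 ^ 2 + p.2) ^ (-(m1 : ℤ)) *
          (1 + p.1 ^ 2 + p.2 * s ^ 2) ^ (-(m2 : ℤ)) : ℝ) : ℂ) := by
      intro s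
      rw [hGdef]
      simp only [hcast s]
      exact integral_ofReal
    have h1 : AnalyticOnNhd ℝ (fun s : ℝ => (G ↑s).re) (Ioi 0) := by
      intro s hs
      have hs' : (0:ℝ) < s := hs
      have hmem : ((s:ℂ)) ∈ {s : ℂ | 0 < (s^2).re} := by
        simp only [Set.mem_setOf_eq, ← Complex.ofReal_pow, Complex.ofReal_re]
        positivity
      have hG := (hGan _ hmem).restrictScalars (𝕜 := ℝ)
      have := (Complex.reCLM.analyticAt _).comp (hG.comp (Complex.ofRealCLM.analyticAt s))
      exact this
    have h2 : AnalyticOnNhd ℝ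
        (fun s : ℝ => ∫ p in Set.Ioi (0:ℝ) ×ˢ Set.Ioi (0:ℝ),
          p.1 ^ (2 * k1) * p.2 ^ ((k2 : ℝ) - 1 / 2) *
          (1 + p.1 ^ 2 + p.2) ^ (-(m1 : ℤ)) *
          (1 + p.1 ^ 2 + p.2 * s ^ 2) ^ (-(m2 : ℤ))) (Ioi 0) := by
      refine h1.congr isOpen_Ioi (fun s hs => ?_)
      rw [hbridge s, Complex.ofReal_re]
    exact h2.analyticOn
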